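/- With γ⁻¹ = α(1 + √(1-μ₁)) and γ'⁻¹ = (1-α)(1/√(1-μ₁) + 1), where μ₁ = ρd²(K - (1-α)T)/(1-α+ρd²K), the quantity τK = αρ²d⁴KT / (ρd²(γ⁻¹K + αγ'⁻¹T) + γ⁻¹γ'⁻¹) simplifies to τK = ρ²d⁴KT / ((1-α)(√(1+ρd²T) + √(1 + ρd²K/(1-α)))²). -/

import Mathlib

/-- With the optimal power coefficients `γ⁻¹ = α(1+√(1-μ₁))`,
`γ'⁻¹ = (1-α)(1/√(1-μ₁)+1)`, `μ₁ = ρd²(K-(1-α)T)/(1-α+ρd²K)`, the quantity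
`τK = αρ²d⁴KT / (ρd²(γ⁻¹K + αγ'⁻¹T) + γ⁻¹γ'⁻¹)` equals
`ρ²d⁴KT / ((1-α)(√(1+ρd²T) + √(1+ρd²K/(1-α)))²)`. -/
theorem tauK_simplification (α T K ρ d : ℝ) (hα : α ∈ Set.Ioo (0 : ℝ) 1)
    (hT : 0 < T) (hK : 0 < K) (hρ : 0 < ρ) (hd : 0 < d) (hKT : K ≤ α * T) :
    let μ₁ := ρ * d ^ 2 * (K - (1 - α) * T) / (1 - α + ρ * d ^ 2 * K)
    let ginv := α * (1 + Real.sqrt (1 - μ₁))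
    let gpinv := (1 - α) * (1 / Real.sqrt (1 - μ₁) + 1)
    α * ρ ^ 2 * d ^ 4 * K * T / (ρ * d ^ 2 * (ginv * K + α * gpinv * T) + ginv * gpinv) =
      ρ ^ 2 * d ^ 4 * K * T /
        ((1 - α) *
          (Real.sqrt (1 + ρ * d ^ 2 * T) + Real.sqrt (1 + ρ * d ^ 2 * K / (1 - α))) ^ 2) := by
  obtain ⟨hα0, hα1⟩ := hα
  intro μ₁ ginv gpinv
  have h1α : (0:ℝ) < 1 - α := by linarith
  have hrd : (0:ℝ) < ρ * d ^ 2 := by positivity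
  set A := Real.sqrt (1 + ρ * d ^ 2 * T) with hA
  set B := Real.sqrt (1 + ρ * d ^ 2 * K / (1 - α)) with hB
  have hApos : 0 < A := Real.sqrt_pos.2 (by positivity)
  have hBpos : 0 < B := Real.sqrt_pos.2 (by positivity)
  have hA2 : A ^ 2 = 1 + ρ * d ^ 2 * T := Real.sq_sqrt (by positivity)
  have hB2 : B ^ 2 = 1 + ρ * d ^ 2 * K / (1 - α) := Real.sq_sqrt (by positivity)
  have hden : (0:ℝ) < 1 - α + ρ * d ^ 2 * K := by positivity
  have hμ : 1 - μ₁ = (1 + ρ * d ^ 2 * T) / (1 + ρ * d ^ 2 * K / (1 - α)) := by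
    show 1 - ρ * d ^ 2 * (K - (1 - α) * T) / (1 - α + ρ * d ^ 2 * K) = _
    field_simp
    ring
  have hs : Real.sqrt (1 - μ₁) = A / B := by
    rw [hμ, Real.sqrt_div (by positivity)]
  have hginv : ginv = α * (A + B) / B := by
    show α * (1 + Real.sqrt (1 - μ₁)) = _
    rw [hs]; field_simp
    ring
  have hgpinv : gpinv = (1 - α) * (A + B) / A := by
    show (1 - α) * (1 / Real.sqrt (1 - μ₁) + 1) = _
    rw [hs]
    field_simp
    ring
  rw [hginv, hgpinv]
  have hkey : ρ * d ^ 2 * (α * (A + B) / B * K + α * ((1 - α) * (A + B) / A) * T) +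
      α * (A + B) / B * ((1 - α) * (A + B) / A) = α * ((1 - α) * (A + B) ^ 2) := by
    have h1 : ρ * d ^ 2 * T = A ^ 2 - 1 := by linarith [hA2]
    have h2 : ρ * d ^ 2 * K = (1 - α) * (B ^ 2 - 1) := by
      field_simp at hB2; nlinarith [hB2]
    field_simp
    linear_combination A * h2 + (B * (1 - α)) * h1
  rw [hkey]
  have hAB : 0 < A + B := by linarith
  field_simp
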